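/- Let G=(V,E) be a finite simple undirected graph and let (S_t) be the evolving set process. For each step j ≥ 1, the conditional expectation of the volume of the symmetric difference between consecutive states satisfies E[ μ(S_j Δ S_{j-1}) | S_{j-1} ] = ∂(S_{j-1}). -/

import Mathlib

open scoped Classical symmDiff

noncomputable section

variable {V : Type*} [Fintype V] [DecidableEq V]

/-- The volume `μ(S)` of a set of vertices: the sum of the degrees. -/
def vol (G : SimpleGraph V) [DecidableRel G.Adj] (S : Finset V) : ℝ :=
  ∑ x ∈ S, (G.degree x : ℝ)

/-- The number of edges leaving `S`, i.e. `∂(S) = e(S, Sᶜ)`. -/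
def bdry (G : SimpleGraph V) [DecidableRel G.Adj] (S : Finset V) : ℝ :=
  ∑ x ∈ S, ((Sᶜ.filter (G.Adj x)).card : ℝ)

/-- The conductance `φ(S) = ∂(S)/μ(S)`. -/
def phiCond (G : SimpleGraph V) [DecidableRel G.Adj] (S : Finset V) : ℝ :=
  bdry G S / vol G S

/-- The lazy random walk kernel `p(x,y)`: `1/2` if `x = y`, `1/(2 d(x))` if `x ~ y`,
and `0` otherwise. -/
def walkP (G : SimpleGraph V) [DecidableRel G.Adj] (x y : V) : ℝ :=
  if x = y then 1/2 else if G.Adj x y then 1 / (2 * (G.degree x : ℝ)) else 0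

/-- `p(x,S) = Σ_{y∈S} p(x,y)`. -/
def pset (G : SimpleGraph V) [DecidableRel G.Adj] (x : V) (S : Finset V) : ℝ :=
  ∑ y ∈ S, walkP G x y

/-- One step of the evolving set process from `S` with threshold `u`:
`S₁ = {y : p(y,S) ≥ u}`. -/
def esStep (G : SimpleGraph V) [DecidableRel G.Adj] (S : Finset V) (u : ℝ) : Finset V :=
  Finset.univ.filter fun y => u ≤ pset G y S

/-- The ESP transition kernel `K(S,S')`: the probability, for a uniform threshold
`U ∈ [0,1]`, that `{y : p(y,S) ≥ U} = S'`. -/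
def Kk (G : SimpleGraph V) [DecidableRel G.Adj] (S S' : Finset V) : ℝ :=
  (MeasureTheory.volume {u : ℝ | u ∈ Set.Icc (0:ℝ) 1 ∧ esStep G S u = S'}).toReal

/-- The volume-biased ESP transition kernel `K̂(S,S') = (μ(S')/μ(S)) K(S,S')`. -/
def Khat (G : SimpleGraph V) [DecidableRel G.Adj] (S S' : Finset V) : ℝ :=
  vol G S' / vol G S * Kk G S S'

section Aux

variable (G : SimpleGraph V) [DecidableRel G.Adj]

lemma card_filter_adj_le (x : V) (S : Finset V) :
    (S.filter (G.Adj x)).card ≤ G.degree x := by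
  rw [← SimpleGraph.card_neighborFinset_eq_degree]
  apply Finset.card_le_card
  intro y hy
  simp only [Finset.mem_filter] at hy
  simpa [SimpleGraph.mem_neighborFinset] using hy.2

lemma degree_split (x : V) (S : Finset V) :
    G.degree x = (S.filter (G.Adj x)).card + (Sᶜ.filter (G.Adj x)).card := by
  rw [← SimpleGraph.card_neighborFinset_eq_degree, SimpleGraph.neighborFinset_eq_filter]
  have h : (Finset.univ : Finset V) = S ∪ Sᶜ := (Finset.union_compl S).symm
  rw [h, Finset.filter_union, Finset.card_union_of_disjoint]
  exact Finset.disjoint_filter_filter disjoint_compl_right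

lemma pset_eq (x : V) (S : Finset V) :
    pset G x S = (if x ∈ S then (1:ℝ)/2 else 0)
      + ((S.filter (G.Adj x)).card : ℝ) / (2 * (G.degree x : ℝ)) := by
  have h : ∀ y ∈ S, walkP G x y
      = (if x = y then (1:ℝ)/2 else 0)
        + (if G.Adj x y then 1 / (2 * (G.degree x : ℝ)) else 0) := by
    intro y _
    unfold walkP
    by_cases hxy : x = y
    · simp [hxy, (G.irrefl)]
    · simp [hxy]
  rw [pset, Finset.sum_congr rfl h, Finset.sum_add_distrib]
  congr 1
  · exact Finset.sum_ite_eq S x fun _ => (1:ℝ)/2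
  · rw [← Finset.sum_filter, Finset.sum_const, nsmul_eq_mul, mul_one_div]

lemma frac_le_half (x : V) (S : Finset V) :
    ((S.filter (G.Adj x)).card : ℝ) / (2 * (G.degree x : ℝ)) ≤ 1/2 := by
  rcases Nat.eq_zero_or_pos (G.degree x) with hd | hd
  · simp [hd]
  · have hd' : (0:ℝ) < (G.degree x : ℝ) := by exact_mod_cast hd
    rw [div_le_div_iff₀ (by linarith) (by norm_num)]
    have := card_filter_adj_le G x S
    have : ((S.filter (G.Adj x)).card : ℝ) ≤ (G.degree x : ℝ) := by exact_mod_cast this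
    linarith

lemma frac_nonneg (x : V) (S : Finset V) :
    0 ≤ ((S.filter (G.Adj x)).card : ℝ) / (2 * (G.degree x : ℝ)) := by positivity

lemma pset_nonneg (x : V) (S : Finset V) : 0 ≤ pset G x S := by
  rw [pset_eq]
  have := frac_nonneg G x S
  split_ifs <;> linarith

lemma pset_le_one (x : V) (S : Finset V) : pset G x S ≤ 1 := by
  rw [pset_eq]
  have := frac_le_half G x S
  split_ifs <;> linarith

lemma mem_esStep (x : V) (S : Finset V) (u : ℝ) :
    x ∈ esStep G S u ↔ u ≤ pset G x S := by
  simp [esStep]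

lemma measurable_KSet (S S' : Finset V) :
    MeasurableSet {u : ℝ | u ∈ Set.Icc (0:ℝ) 1 ∧ esStep G S u = S'} := by
  have h : {u : ℝ | u ∈ Set.Icc (0:ℝ) 1 ∧ esStep G S u = S'}
      = Set.Icc 0 1 ∩ ⋂ y : V, {u : ℝ | (y ∈ S' ↔ u ≤ pset G y S)} := by
    ext u
    simp only [Set.mem_inter_iff, Set.mem_iInter, Set.mem_setOf_eq, Finset.ext_iff,
      mem_esStep]
    constructor
    · rintro ⟨h1, h2⟩; exact ⟨h1, fun y => (h2 y).symm⟩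
    · rintro ⟨h1, h2⟩; exact ⟨h1, fun y => (h2 y).symm⟩
  rw [h]
  refine measurableSet_Icc.inter (MeasurableSet.iInter fun y => ?_)
  by_cases hy : y ∈ S'
  · have : {u : ℝ | (y ∈ S' ↔ u ≤ pset G y S)} = Set.Iic (pset G y S) := by
      ext u; simp [hy]
    rw [this]; exact measurableSet_Iic
  · have : {u : ℝ | (y ∈ S' ↔ u ≤ pset G y S)} = (Set.Iic (pset G y S))ᶜ := by
      ext u; simp [hy]
    rw [this]; exact measurableSet_Iic.compl

lemma sum_Kk_eq (x : V) (S : Finset V) :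
    ∑ S' : Finset V, Kk G S S' * (if x ∈ symmDiff S' S then (1:ℝ) else 0)
      = (MeasureTheory.volume
          {u : ℝ | u ∈ Set.Icc (0:ℝ) 1 ∧ x ∈ symmDiff (esStep G S u) S}).toReal := by
  classical
  simp only [mul_ite, mul_one, mul_zero]
  rw [← Finset.sum_filter]
  set F : Finset (Finset V) := Finset.univ.filter (fun S' => x ∈ symmDiff S' S) with hF
  have hfin : ∀ S' : Finset V,
      MeasureTheory.volume {u : ℝ | u ∈ Set.Icc (0:ℝ) 1 ∧ esStep G S u = S'} ≠ ⊤ := by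
    intro S'
    have hle : MeasureTheory.volume {u : ℝ | u ∈ Set.Icc (0:ℝ) 1 ∧ esStep G S u = S'}
        ≤ MeasureTheory.volume (Set.Icc (0:ℝ) 1) := by
      apply MeasureTheory.measure_mono
      intro u hu; exact hu.1
    refine ne_top_of_le_ne_top ?_ hle
    simp [Real.volume_Icc]
  unfold Kk
  rw [← ENNReal.toReal_sum (fun S' _ => hfin S')]
  congr 1
  rw [← MeasureTheory.measure_biUnion_finset ?_ (fun S' _ => measurable_KSet G S S')]
  · congr 1
    ext u
    simp only [Set.mem_iUnion, Set.mem_setOf_eq, hF, Finset.mem_filter, Finset.mem_univ,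
      true_and]
    constructor
    · rintro ⟨S', hS', hu, rfl⟩; exact ⟨hu, hS'⟩
    · rintro ⟨hu, hx⟩; exact ⟨esStep G S u, hx, hu, rfl⟩
  · intro S' _ S'' _ hne
    simp only [Function.onFun, Set.disjoint_left]
    rintro u ⟨_, h1⟩ ⟨_, h2⟩
    exact hne (h1 ▸ h2 ▸ rfl)

lemma ASet_mem_of_mem (x : V) (S : Finset V) (hx : x ∈ S) :
    {u : ℝ | u ∈ Set.Icc (0:ℝ) 1 ∧ x ∈ symmDiff (esStep G S u) S}
      = Set.Ioc (pset G x S) 1 := by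
  ext u
  have h0 := pset_nonneg G x S
  simp only [Set.mem_setOf_eq, Set.mem_Icc, Set.mem_Ioc, Finset.mem_symmDiff, mem_esStep,
    hx, not_true, and_false, false_or, and_true, true_and, not_le]
  constructor
  · rintro ⟨⟨_, h1⟩, h2⟩; exact ⟨h2, h1⟩
  · rintro ⟨h1, h2⟩; exact ⟨⟨by linarith, h2⟩, h1⟩

lemma ASet_mem_of_not_mem (x : V) (S : Finset V) (hx : x ∉ S) :
    {u : ℝ | u ∈ Set.Icc (0:ℝ) 1 ∧ x ∈ symmDiff (esStep G S u) S}
      = Set.Icc 0 (pset G x S) := by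
  ext u
  have h1 := pset_le_one G x S
  simp only [Set.mem_setOf_eq, Set.mem_Icc, Finset.mem_symmDiff, mem_esStep, hx,
    not_false_iff, and_true, false_and, or_false]
  constructor
  · rintro ⟨⟨h0, _⟩, h2⟩; exact ⟨h0, h2⟩
  · rintro ⟨h0, h2⟩; exact ⟨⟨h0, by linarith⟩, h2⟩

lemma cut_symm (S : Finset V) :
    ∑ x ∈ Sᶜ, ((S.filter (G.Adj x)).card : ℝ)
      = ∑ x ∈ S, ((Sᶜ.filter (G.Adj x)).card : ℝ) := by
  simp_rw [Finset.card_filter]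
  push_cast
  rw [Finset.sum_comm]
  apply Finset.sum_congr rfl
  intro y _
  apply Finset.sum_congr rfl
  intro x _
  by_cases hadj : G.Adj x y
  · simp [hadj, G.adj_symm hadj]
  · have : ¬ G.Adj y x := fun h => hadj (G.adj_symm h)
    simp [hadj, this]

end Aux

/-- For the evolving set process, the conditional expectation of the volume of the
symmetric difference between consecutive states satisfies
`E[μ(S_j Δ S_{j-1}) | S_{j-1} = S] = ∂(S)` for every state `S`. -/
theorem statement15 (G : SimpleGraph V) [DecidableRel G.Adj] :
    ∀ S : Finset V, ∑ S' : Finset V, Kk G S S' * vol G (symmDiff S' S) = bdry G S := by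
  intro S
  have hvol : ∀ S' : Finset V, vol G (symmDiff S' S)
      = ∑ x : V, (if x ∈ symmDiff S' S then (G.degree x : ℝ) else 0) := by
    intro S'
    rw [vol, ← Finset.sum_filter]
    congr 1
    simp
  calc ∑ S' : Finset V, Kk G S S' * vol G (symmDiff S' S)
      = ∑ x : V, (G.degree x : ℝ) *
          (∑ S' : Finset V, Kk G S S' * (if x ∈ symmDiff S' S then (1:ℝ) else 0)) := by
        simp_rw [hvol, Finset.mul_sum]
        rw [Finset.sum_comm]
        apply Finset.sum_congr rfl; intro x _
        apply Finset.sum_congr rfl; intro S' _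
        split_ifs <;> ring
    _ = ∑ x : V, (G.degree x : ℝ) *
          (MeasureTheory.volume
            {u : ℝ | u ∈ Set.Icc (0:ℝ) 1 ∧ x ∈ symmDiff (esStep G S u) S}).toReal := by
        simp_rw [sum_Kk_eq]
    _ = bdry G S := by
        rw [← Finset.sum_filter_add_sum_filter_not Finset.univ (· ∈ S)]
        have hfS : Finset.univ.filter (· ∈ S) = S := by simp
        have hfSc : Finset.univ.filter (fun x => ¬ x ∈ S) = Sᶜ := by
          ext x; simp
        rw [hfS, hfSc]
        have hterm1 : ∀ x ∈ S, (G.degree x : ℝ) *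
            (MeasureTheory.volume
              {u : ℝ | u ∈ Set.Icc (0:ℝ) 1 ∧ x ∈ symmDiff (esStep G S u) S}).toReal
            = ((Sᶜ.filter (G.Adj x)).card : ℝ) / 2 := by
          intro x hx
          rw [ASet_mem_of_mem G x S hx, Real.volume_Ioc,
            ENNReal.toReal_ofReal (by linarith [pset_le_one G x S])]
          rw [pset_eq G x S, if_pos hx]
          have hd := degree_split G x S
          have hd' : (G.degree x : ℝ) = ((S.filter (G.Adj x)).card : ℝ)
              + ((Sᶜ.filter (G.Adj x)).card : ℝ) := by exact_mod_cast hd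
          rcases Nat.eq_zero_or_pos (G.degree x) with h0 | h0
          · have hb : (Sᶜ.filter (G.Adj x)).card = 0 := by omega
            simp [h0, hb]
          · have hdpos : (0:ℝ) < (G.degree x : ℝ) := by exact_mod_cast h0
            rw [show ((Sᶜ.filter (G.Adj x)).card : ℝ)
                = (G.degree x : ℝ) - ((S.filter (G.Adj x)).card : ℝ) from by linarith]
            field_simp
            ring
        have hterm2 : ∀ x ∈ Sᶜ, (G.degree x : ℝ) *
            (MeasureTheory.volume
              {u : ℝ | u ∈ Set.Icc (0:ℝ) 1 ∧ x ∈ symmDiff (esStep G S u) S}).toReal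
            = ((S.filter (G.Adj x)).card : ℝ) / 2 := by
          intro x hx
          rw [Finset.mem_compl] at hx
          rw [ASet_mem_of_not_mem G x S hx, Real.volume_Icc,
            ENNReal.toReal_ofReal (by linarith [pset_nonneg G x S])]
          rw [pset_eq G x S, if_neg hx]
          rcases Nat.eq_zero_or_pos (G.degree x) with h0 | h0
          · have ha : (S.filter (G.Adj x)).card = 0 := by
              have := degree_split G x S
              omega
            simp [h0, ha]
          · have hdpos : (0:ℝ) < (G.degree x : ℝ) := by exact_mod_cast h0
            field_simp
            ring
        rw [Finset.sum_congr rfl hterm1, Finset.sum_congr rfl hterm2]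
        rw [← Finset.sum_div, ← Finset.sum_div, cut_symm, bdry]
        ring
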